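/- Let λ₀, γ, α, β, V₀, u₁ > 0 and t > 0 with z̄ > λ₀ t. For the model where mutations occur at rate V₀ u₁ e^{λ₀ s} with fitness increments having tail P(X > x) = x^β e^{-γ x^α}, the expected total number at time t of type-1 descendants of mutations whose growth-constant z(s,x) = (λ₀+x)(t-s) is at most z̄ satisfies the bound E[Σ_{z(s,x) ≤ z̄} Z₁^{s,x}(t)] ≤ C·V₀·u₁·z̄·e^{λ₀ t + z̄} for a constant C depending only on λ₀, γ, α, β. -/

import Mathlib

open Real MeasureTheory Set

lemma aux_int_stmt14 (gam alpha beta : ℝ) (hgam : 0 < gam) (halpha : 0 < alpha)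
    (hbeta : 0 < beta) :
    IntegrableOn (fun y : ℝ => y ^ beta * Real.exp (-gam * y ^ alpha)) (Ioi 0) := by
  set q : ℝ := (beta + 1) / alpha - 1 with hq
  have hq1 : -1 < q := by
    have : 0 < (beta + 1) / alpha := div_pos (by linarith) halpha
    simp only [hq]; linarith
  have h1 : IntegrableOn (fun u : ℝ => u ^ q * Real.exp (-gam * u)) (Ioi 0) := by
    have h := integrableOn_rpow_mul_exp_neg_mul_rpow hq1 (zero_lt_one' ℝ) hgam
    refine h.congr_fun (fun x _ => ?_) measurableSet_Ioi
    beta_reduce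
    rw [Real.rpow_one]
  have h2 := (integrableOn_Ioi_comp_rpow_iff'
      (fun u : ℝ => u ^ q * Real.exp (-gam * u)) halpha.ne').mpr h1
  refine h2.congr_fun (fun x hx => ?_) measurableSet_Ioi
  have hx0 : (0:ℝ) < x := hx
  have hxa : (x ^ alpha) ^ q = x ^ (alpha * q) := (Real.rpow_mul hx0.le _ _).symm
  have haq : alpha * q = beta + 1 - alpha := by
    rw [hq, mul_sub, mul_div_assoc', mul_div_cancel_left₀ _ halpha.ne']; ring
  beta_reduce
  rw [smul_eq_mul, hxa, haq, ← mul_assoc, ← Real.rpow_add hx0]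
  ring_nf

theorem stmt_14 (lam0 gam alpha beta : ℝ)
    (hlam0 : 0 < lam0) (hgam : 0 < gam) (halpha : 0 < alpha) (hbeta : 0 < beta) :
    ∃ C : ℝ, 0 < C ∧ ∀ V0 u1 t zbar : ℝ, 0 < V0 → 0 < u1 → 0 < t → lam0 * t < zbar →
      V0 * u1 * ∫ s in (0:ℝ)..t, ∫ y in (0:ℝ)..(zbar / (t - s) - lam0),
          Real.exp (lam0 * s) * y ^ beta * Real.exp (-gam * y ^ alpha) *
            Real.exp ((lam0 + y) * (t - s))
        ≤ C * V0 * u1 * zbar * Real.exp (lam0 * t + zbar) := by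
  have hK_int := aux_int_stmt14 gam alpha beta hgam halpha hbeta
  set K : ℝ := ∫ y in Ioi (0:ℝ), y ^ beta * Real.exp (-gam * y ^ alpha) with hKdef
  have hK0 : 0 ≤ K := setIntegral_nonneg measurableSet_Ioi
    (fun y hy => mul_nonneg (Real.rpow_nonneg (le_of_lt hy) _) (Real.exp_pos _).le)
  have hc1 : Continuous (fun y : ℝ => y ^ beta) :=
    continuous_iff_continuousAt.mpr
      (fun x => Real.continuousAt_rpow_const x beta (Or.inr hbeta.le))
  have hc2 : Continuous (fun y : ℝ => y ^ alpha) :=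
    continuous_iff_continuousAt.mpr
      (fun x => Real.continuousAt_rpow_const x alpha (Or.inr halpha.le))
  refine ⟨(K + 1) / lam0, div_pos (by linarith) hlam0, ?_⟩
  intro V0 u1 t zbar hV0 hu1 ht hz
  set B : ℝ := K * (Real.exp (lam0 * t) * Real.exp zbar) with hBdef
  set F : ℝ → ℝ := fun s => ∫ y in (0:ℝ)..(zbar / (t - s) - lam0),
      Real.exp (lam0 * s) * y ^ beta * Real.exp (-gam * y ^ alpha) *
        Real.exp ((lam0 + y) * (t - s)) with hFdef
  have hzbar0 : 0 < zbar := lt_trans (by positivity) hz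
  have key : ∀ s ∈ Ico (0:ℝ) t, ‖F s‖ ≤ B := by
    intro s hs
    obtain ⟨hs0, hst⟩ := hs
    have hτ : 0 < t - s := by linarith
    set yb : ℝ := zbar / (t - s) - lam0 with hyb
    have hyb0 : 0 < yb := by
      have h1 : lam0 * (t - s) < zbar := by nlinarith
      have := (lt_div_iff₀ hτ).mpr h1
      simp only [hyb]; linarith
    have hgle : ∀ y ∈ Icc (0:ℝ) yb,
        Real.exp (lam0 * s) * y ^ beta * Real.exp (-gam * y ^ alpha) *
          Real.exp ((lam0 + y) * (t - s))
        ≤ (Real.exp (lam0 * t) * Real.exp zbar) *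
          (y ^ beta * Real.exp (-gam * y ^ alpha)) := by
      intro y hy
      have hy0 : 0 ≤ y := hy.1
      have h1 : Real.exp (lam0 * s) ≤ Real.exp (lam0 * t) :=
        Real.exp_le_exp.mpr (by nlinarith)
      have h2 : Real.exp ((lam0 + y) * (t - s)) ≤ Real.exp zbar := by
        apply Real.exp_le_exp.mpr
        have : lam0 + y ≤ zbar / (t - s) := by
          have := hy.2; simp only [hyb] at this; linarith
        calc (lam0 + y) * (t - s) ≤ (zbar / (t - s)) * (t - s) :=
              mul_le_mul_of_nonneg_right this hτ.le
          _ = zbar := by field_simp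
      have h3 : Real.exp (lam0 * s) * Real.exp ((lam0 + y) * (t - s))
          ≤ Real.exp (lam0 * t) * Real.exp zbar :=
        mul_le_mul h1 h2 (Real.exp_pos _).le (Real.exp_pos _).le
      have h4 : 0 ≤ y ^ beta * Real.exp (-gam * y ^ alpha) :=
        mul_nonneg (Real.rpow_nonneg hy0 _) (Real.exp_pos _).le
      calc Real.exp (lam0 * s) * y ^ beta * Real.exp (-gam * y ^ alpha) *
            Real.exp ((lam0 + y) * (t - s))
          = (Real.exp (lam0 * s) * Real.exp ((lam0 + y) * (t - s))) *
            (y ^ beta * Real.exp (-gam * y ^ alpha)) := by ring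
        _ ≤ (Real.exp (lam0 * t) * Real.exp zbar) *
            (y ^ beta * Real.exp (-gam * y ^ alpha)) :=
              mul_le_mul_of_nonneg_right h3 h4
    have hcontg : Continuous (fun y : ℝ =>
        Real.exp (lam0 * s) * y ^ beta * Real.exp (-gam * y ^ alpha) *
          Real.exp ((lam0 + y) * (t - s))) := by
      exact ((continuous_const.mul hc1).mul
          (Real.continuous_exp.comp (continuous_const.mul hc2))).mul
        (Real.continuous_exp.comp
          ((continuous_const.add continuous_id).mul continuous_const))
    have hconth : Continuous (fun y : ℝ =>
        (Real.exp (lam0 * t) * Real.exp zbar) *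
          (y ^ beta * Real.exp (-gam * y ^ alpha))) := by
      exact continuous_const.mul
        (hc1.mul (Real.continuous_exp.comp (continuous_const.mul hc2)))
    have hF_nonneg : 0 ≤ F s := by
      apply intervalIntegral.integral_nonneg hyb0.le
      intro y hy
      have hy0 : 0 ≤ y := hy.1
      positivity
    have hstep1 : F s ≤ ∫ y in (0:ℝ)..yb,
        (Real.exp (lam0 * t) * Real.exp zbar) *
          (y ^ beta * Real.exp (-gam * y ^ alpha)) := by
      exact intervalIntegral.integral_mono_on hyb0.le
        (hcontg.intervalIntegrable _ _) (hconth.intervalIntegrable _ _) hgle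
    have hstep2 : (∫ y in (0:ℝ)..yb, y ^ beta * Real.exp (-gam * y ^ alpha)) ≤ K := by
      rw [intervalIntegral.integral_of_le hyb0.le]
      refine setIntegral_mono_set hK_int ?_ ?_
      · refine (ae_restrict_iff' measurableSet_Ioi).mpr (Filter.Eventually.of_forall ?_)
        intro y hy
        exact mul_nonneg (Real.rpow_nonneg (le_of_lt hy) _) (Real.exp_pos _).le
      · exact HasSubset.Subset.eventuallyLE Ioc_subset_Ioi_self
    have hstep3 : F s ≤ B := by
      calc F s ≤ ∫ y in (0:ℝ)..yb,
            (Real.exp (lam0 * t) * Real.exp zbar) *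
              (y ^ beta * Real.exp (-gam * y ^ alpha)) := hstep1
        _ = (Real.exp (lam0 * t) * Real.exp zbar) *
            ∫ y in (0:ℝ)..yb, y ^ beta * Real.exp (-gam * y ^ alpha) :=
              intervalIntegral.integral_const_mul _ _
        _ ≤ (Real.exp (lam0 * t) * Real.exp zbar) * K :=
              mul_le_mul_of_nonneg_left hstep2 (by positivity)
        _ = B := by rw [hBdef]; ring
    rw [Real.norm_eq_abs, abs_of_nonneg hF_nonneg]
    exact hstep3
  have houter : ‖∫ s in (0:ℝ)..t, F s‖ ≤ B * |t - 0| := by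
    apply intervalIntegral.norm_integral_le_of_norm_le_const_ae
    have ht' : ∀ᵐ x : ℝ ∂(volume : Measure ℝ), x ≠ t := by
      refine ae_iff.mpr ?_
      simp only [ne_eq, not_not, setOf_eq_eq_singleton]
      exact measure_singleton t
    filter_upwards [ht'] with s hs hmem
    rw [Set.uIoc_of_le ht.le] at hmem
    exact key s ⟨hmem.1.le, lt_of_le_of_ne hmem.2 hs⟩
  have hI : (∫ s in (0:ℝ)..t, F s) ≤ B * t := by
    calc (∫ s in (0:ℝ)..t, F s) ≤ ‖∫ s in (0:ℝ)..t, F s‖ := le_abs_self _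
      _ ≤ B * |t - 0| := houter
      _ = B * t := by rw [sub_zero, abs_of_pos ht]
  have hE : Real.exp (lam0 * t + zbar) = Real.exp (lam0 * t) * Real.exp zbar :=
    Real.exp_add _ _
  have hBt : B * t ≤ (K + 1) / lam0 * zbar * Real.exp (lam0 * t + zbar) := by
    rw [hE, hBdef]
    have hEpos : 0 < Real.exp (lam0 * t) * Real.exp zbar := by positivity
    have htz : t ≤ zbar / lam0 := by
      rw [le_div_iff₀ hlam0]; nlinarith
    have h1 : K * t ≤ (K + 1) / lam0 * zbar := by
      calc K * t ≤ K * (zbar / lam0) := mul_le_mul_of_nonneg_left htz hK0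
        _ ≤ (K + 1) * (zbar / lam0) := by
            apply mul_le_mul_of_nonneg_right (by linarith) (by positivity)
        _ = (K + 1) / lam0 * zbar := by ring
    calc K * (Real.exp (lam0 * t) * Real.exp zbar) * t
        = (K * t) * (Real.exp (lam0 * t) * Real.exp zbar) := by ring
      _ ≤ ((K + 1) / lam0 * zbar) * (Real.exp (lam0 * t) * Real.exp zbar) :=
          mul_le_mul_of_nonneg_right h1 hEpos.le
      _ = (K + 1) / lam0 * zbar * (Real.exp (lam0 * t) * Real.exp zbar) := by ring
  have hfinal : V0 * u1 * (∫ s in (0:ℝ)..t, F s)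
      ≤ (K + 1) / lam0 * V0 * u1 * zbar * Real.exp (lam0 * t + zbar) := by
    calc V0 * u1 * (∫ s in (0:ℝ)..t, F s) ≤ V0 * u1 * (B * t) := by
          apply mul_le_mul_of_nonneg_left hI (by positivity)
      _ ≤ V0 * u1 * ((K + 1) / lam0 * zbar * Real.exp (lam0 * t + zbar)) := by
          apply mul_le_mul_of_nonneg_left hBt (by positivity)
      _ = (K + 1) / lam0 * V0 * u1 * zbar * Real.exp (lam0 * t + zbar) := by ring
  exact hfinal
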